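/- Let Φ be an injective map from a set X into a Hilbert space H. Then for every t > 0 the Gaussian-type kernel (x,y) ↦ exp(−t ‖Φ(x) − Φ(y)‖²_H) is strictly positive definite on X × X. -/

import Mathlib

open scoped ComplexOrder ComplexConjugate

/-- `k` is strictly positive definite on `X`. -/
def IsStrictPosKernel {X : Type*} (k : X → X → ℂ) : Prop :=
  ∀ (n : ℕ) (x : Fin n → X), Function.Injective x →
    ∀ c : Fin n → ℂ, c ≠ 0 →
      0 < ∑ i, ∑ j, c i * conj (c j) * k (x i) (x j)

open scoped RealInnerProductSpace

lemma my_exists_inner_ne_zero {E : Type*} [NormedAddCommGroup E] [InnerProductSpace ℝ E]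
    (s : Finset E) (hs : ∀ w ∈ s, w ≠ 0) : ∃ v : E, ∀ w ∈ s, ⟪v, w⟫ ≠ 0 := by
  classical
  induction s using Finset.induction_on with
  | empty => exact ⟨0, by simp⟩
  | @insert a s ha ih =>
    obtain ⟨v, hv⟩ := ih fun w hw => hs w (Finset.mem_insert_of_mem hw)
    have ha0 : a ≠ 0 := hs a (Finset.mem_insert_self a s)
    obtain ⟨c, hc⟩ := Infinite.exists_notMem_finset
      ((insert a s).image fun w => -⟪v, w⟫ / ⟪a, w⟫)
    refine ⟨v + c • a, fun w hw => ?_⟩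
    intro h0
    rw [inner_add_left, real_inner_smul_left] at h0
    by_cases haw : ⟪a, w⟫ = 0
    · rw [haw, mul_zero, add_zero] at h0
      rcases Finset.mem_insert.mp hw with rfl | hw'
      · exact ha0 (inner_self_eq_zero.mp haw)
      · exact hv w hw' h0
    · apply hc
      refine Finset.mem_image.mpr ⟨w, hw, ?_⟩
      field_simp
      linarith [h0]

lemma my_exists_separating {E : Type*} [NormedAddCommGroup E] [InnerProductSpace ℝ E]
    {n : ℕ} (y : Fin n → E) (hy : Function.Injective y) :
    ∃ v : E, Function.Injective fun i => ⟪v, y i⟫ := by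
  classical
  obtain ⟨v, hv⟩ := my_exists_inner_ne_zero
    ((Finset.univ.filter fun p : Fin n × Fin n => p.1 ≠ p.2).image fun p => y p.1 - y p.2)
    (by
      intro w hw
      simp only [Finset.mem_image, Finset.mem_filter, Finset.mem_univ, true_and] at hw
      obtain ⟨p, hp, rfl⟩ := hw
      exact sub_ne_zero.mpr fun h => hp (hy h))
  refine ⟨v, fun i j h => ?_⟩
  by_contra hij
  apply hv (y i - y j)
    (Finset.mem_image.mpr ⟨(i, j), Finset.mem_filter.mpr ⟨Finset.mem_univ _, hij⟩, rfl⟩)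
  rw [inner_sub_right]
  simpa [sub_eq_zero] using h

lemma my_pow_sum {d : ℕ} (m : ℕ) (f : Fin d → ℂ) :
    (∑ k, f k) ^ m = ∑ α : Fin m → Fin d, ∏ l, f (α l) := by
  classical
  have h1 : (∑ k, f k) ^ m = ∏ _l : Fin m, (∑ k, f k) := by
    rw [Finset.prod_const, Finset.card_univ, Fintype.card_fin]
  rw [h1, Finset.prod_univ_sum]
  rw [Fintype.piFinset_univ]

lemma my_core {n d : ℕ} (t : ℝ) (ht : 0 < t)
    (y : Fin n → EuclideanSpace ℝ (Fin d)) (hy : Function.Injective y)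
    (c : Fin n → ℂ) (hc : c ≠ 0) :
    0 < ∑ i, ∑ j, c i * conj (c j) * (Real.exp (-t * ‖y i - y j‖ ^ 2) : ℂ) := by
  classical
  set E : Fin n → ℝ := fun i => Real.exp (-t * ‖y i‖ ^ 2) with hE
  set dd : Fin n → ℂ := fun i => c i * (E i : ℂ) with hdd
  set g : Fin n → Fin n → ℝ := fun i j => ∑ k, y i k * y j k with hg
  set P : (m : ℕ) → Fin n → (Fin m → Fin d) → ℂ :=
    fun m i α => ∏ l, ((y i (α l) : ℝ) : ℂ) with hP
  set Z : (m : ℕ) → (Fin m → Fin d) → ℂ := fun m α => ∑ i, dd i * P m i α with hZ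
  set q : ℕ → ℝ :=
    fun m => (2 * t) ^ m / m.factorial * ∑ α : Fin m → Fin d, Complex.normSq (Z m α) with hq
  set F : Fin n → Fin n → ℕ → ℂ :=
    fun i j m => dd i * conj (dd j) * (((2 * t * g i j : ℝ) : ℂ) ^ m / m.factorial) with hF
  have hPconj : ∀ (m : ℕ) (i : Fin n) (α : Fin m → Fin d), conj (P m i α) = P m i α := by
    intro m i α
    rw [hP, map_prod]
    simp [Complex.conj_ofReal]
  -- Step A : kernel factorization
  have hker : ∀ i j, c i * conj (c j) * (Real.exp (-t * ‖y i - y j‖ ^ 2) : ℂ)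
      = dd i * conj (dd j) * (Real.exp (2 * t * g i j) : ℂ) := by
    intro i j
    have h1 : ⟪y i, y j⟫ = g i j := by
      simp [hg, PiLp.inner_apply, RCLike.inner_apply, mul_comm]
    have h2 : -t * ‖y i - y j‖ ^ 2 = -t * ‖y i‖ ^ 2 + -t * ‖y j‖ ^ 2 + 2 * t * g i j := by
      rw [norm_sub_sq_real, h1]; ring
    rw [h2, Real.exp_add, Real.exp_add]
    simp only [hdd, map_mul, Complex.conj_ofReal, hE]
    push_cast
    ring
  have hexp : ∀ r : ℝ, (Real.exp r : ℂ) = ∑' m : ℕ, (r : ℂ) ^ m / m.factorial := by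
    intro r
    rw [Complex.ofReal_exp, Complex.exp_eq_exp_ℂ, NormedSpace.exp_eq_tsum_div]
  have hsumF : ∀ i j, Summable (F i j) :=
    fun i j => (NormedSpace.expSeries_div_summable (((2 * t * g i j : ℝ) : ℂ))).mul_left (dd i * conj (dd j))
  -- Step B : expand as a series
  have hS : ∑ i, ∑ j, c i * conj (c j) * (Real.exp (-t * ‖y i - y j‖ ^ 2) : ℂ)
      = ∑' m : ℕ, ∑ i, ∑ j, F i j m := by
    calc ∑ i, ∑ j, c i * conj (c j) * (Real.exp (-t * ‖y i - y j‖ ^ 2) : ℂ)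
        = ∑ i, ∑ j, ∑' m : ℕ, F i j m := by
          refine Finset.sum_congr rfl fun i _ => Finset.sum_congr rfl fun j _ => ?_
          rw [hker i j, hexp (2 * t * g i j), ← tsum_mul_left]
      _ = ∑ i, ∑' m : ℕ, ∑ j, F i j m :=
          Finset.sum_congr rfl fun i _ => (Summable.tsum_finsetSum fun j _ => hsumF i j).symm
      _ = ∑' m : ℕ, ∑ i, ∑ j, F i j m :=
          (Summable.tsum_finsetSum fun i _ => summable_sum fun j _ => hsumF i j).symm
  -- Step D : each coefficient is a nonnegative real
  have hTq : ∀ m : ℕ, ∑ i, ∑ j, F i j m = (q m : ℂ) := by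
    intro m
    have hgc : ∀ i j, ((2 * t * g i j : ℝ) : ℂ) ^ m
        = (2 * t : ℂ) ^ m * ∑ α : Fin m → Fin d, P m i α * P m j α := by
      intro i j
      have h3 : ((2 * t * g i j : ℝ) : ℂ) = (2 * t : ℂ) * ∑ k, ((y i k : ℝ) : ℂ) * ((y j k : ℝ) : ℂ) := by
        rw [hg]; push_cast; ring
      rw [h3, mul_pow, my_pow_sum m]
      congr 1
      exact Finset.sum_congr rfl fun α _ => Finset.prod_mul_distrib
    calc ∑ i, ∑ j, F i j m
        = ∑ i, ∑ j, ∑ α : Fin m → Fin d, ((2 * t : ℂ) ^ m / m.factorial) *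
            ((dd i * P m i α) * (conj (dd j) * P m j α)) := by
          refine Finset.sum_congr rfl fun i _ => Finset.sum_congr rfl fun j _ => ?_
          rw [hF]
          simp only [hgc i j, Finset.mul_sum, Finset.sum_mul, Finset.sum_div]
          refine Finset.sum_congr rfl fun α _ => by ring
      _ = ∑ α : Fin m → Fin d, ∑ i, ∑ j, ((2 * t : ℂ) ^ m / m.factorial) *
            ((dd i * P m i α) * (conj (dd j) * P m j α)) := by
          rw [show (∑ i, ∑ j, ∑ α : Fin m → Fin d, ((2 * t : ℂ) ^ m / m.factorial) *
              ((dd i * P m i α) * (conj (dd j) * P m j α)))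
              = ∑ i, ∑ α : Fin m → Fin d, ∑ j, ((2 * t : ℂ) ^ m / m.factorial) *
              ((dd i * P m i α) * (conj (dd j) * P m j α)) from
            Finset.sum_congr rfl fun i _ => Finset.sum_comm]
          exact Finset.sum_comm
      _ = ∑ α : Fin m → Fin d, ((2 * t : ℂ) ^ m / m.factorial) * (Z m α * conj (Z m α)) := by
          refine Finset.sum_congr rfl fun α _ => ?_
          have hcz : conj (Z m α) = ∑ j, conj (dd j) * P m j α := by
            rw [hZ, map_sum]
            exact Finset.sum_congr rfl fun j _ => by rw [map_mul, hPconj]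
          rw [hZ, hcz, Finset.sum_mul_sum]
          simp only [Finset.mul_sum]
      _ = (q m : ℂ) := by
          simp only [Complex.mul_conj, hq]
          push_cast
          rw [Finset.mul_sum]
  have hq_nonneg : ∀ m, 0 ≤ q m := by
    intro m
    apply mul_nonneg
    · positivity
    · exact Finset.sum_nonneg fun α _ => Complex.normSq_nonneg _
  -- summability of q
  have hq_summable : Summable q := by
    rw [← Complex.summable_ofReal]
    have : (fun m : ℕ => ((q m : ℝ) : ℂ)) = fun m => ∑ i, ∑ j, F i j m := by
      funext m; rw [hTq m]
    rw [this]
    exact summable_sum fun i _ => summable_sum fun j _ => hsumF i j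
  -- Step F : strict positivity index
  have hdd_ne : dd ≠ 0 := by
    intro h0
    obtain ⟨i, hi⟩ := Function.ne_iff.mp hc
    apply hi
    have h5 := congrFun h0 i
    simp only [hdd, Pi.zero_apply, mul_eq_zero, Complex.ofReal_eq_zero] at h5
    exact h5.resolve_right (by simp [hE, Real.exp_ne_zero])
  have hpos : ∃ m, 0 < q m := by
    by_contra hno
    push_neg at hno
    have hq0 : ∀ m, q m = 0 := fun m => le_antisymm (hno m) (hq_nonneg m)
    have hZ0 : ∀ (m : ℕ) (α : Fin m → Fin d), Z m α = 0 := by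
      intro m α
      have h4 : ∑ α : Fin m → Fin d, Complex.normSq (Z m α) = 0 := by
        have := hq0 m
        rw [hq] at this
        have hcoef : (0 : ℝ) < (2 * t) ^ m / m.factorial := by positivity
        exact (mul_eq_zero.mp this).resolve_left (ne_of_gt hcoef)
      have := (Finset.sum_eq_zero_iff_of_nonneg
        (fun α _ => Complex.normSq_nonneg (Z m α))).mp h4 α (Finset.mem_univ α)
      exact Complex.normSq_eq_zero.mp this
    -- separating vector
    obtain ⟨v, hv⟩ := my_exists_separating y hy
    have hf_inj : Function.Injective fun i => ((⟪v, y i⟫ : ℝ) : ℂ) :=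
      fun i j h => hv (Complex.ofReal_injective h)
    have hmom : ∀ m : ℕ, ∑ i, dd i * ((⟪v, y i⟫ : ℝ) : ℂ) ^ m = 0 := by
      intro m
      have hvin : ∀ i : Fin n, ((⟪v, y i⟫ : ℝ) : ℂ) = ∑ k, ((v k : ℝ) : ℂ) * ((y i k : ℝ) : ℂ) := by
        intro i
        have : ⟪v, y i⟫ = ∑ k, v k * y i k := by
          simp [PiLp.inner_apply, RCLike.inner_apply, mul_comm]
        rw [this]; push_cast; ring
      calc ∑ i, dd i * ((⟪v, y i⟫ : ℝ) : ℂ) ^ m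
          = ∑ i, dd i * ∑ α : Fin m → Fin d, (∏ l, ((v (α l) : ℝ) : ℂ)) * P m i α := by
            refine Finset.sum_congr rfl fun i _ => ?_
            rw [hvin i, my_pow_sum m]
            congr 1
            exact Finset.sum_congr rfl fun α _ => Finset.prod_mul_distrib
        _ = ∑ α : Fin m → Fin d, (∏ l, ((v (α l) : ℝ) : ℂ)) * Z m α := by
            simp only [Finset.mul_sum]
            rw [Finset.sum_comm]
            refine Finset.sum_congr rfl fun α _ => ?_
            simp only [hZ, Finset.mul_sum]
            exact Finset.sum_congr rfl fun i _ => by ring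
        _ = 0 := by
            refine Finset.sum_eq_zero fun α _ => ?_
            rw [hZ0 m α, mul_zero]
    have : dd = 0 :=
      Matrix.eq_zero_of_forall_pow_sum_mul_pow_eq_zero hf_inj fun i => hmom i
    exact hdd_ne this
  obtain ⟨m, hm⟩ := hpos
  have hfinal : (0 : ℝ) < ∑' m, q m := Summable.tsum_pos hq_summable hq_nonneg m hm
  rw [hS]
  have : ∑' m : ℕ, ∑ i, ∑ j, F i j m = ((∑' m, q m : ℝ) : ℂ) := by
    rw [Complex.ofReal_tsum]
    exact tsum_congr hTq
  rw [this]
  exact Complex.zero_lt_real.mpr hfinal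

/-- If `Φ : X → H` is an injective map into a Hilbert space, then for every `t > 0`
the Gaussian-type kernel `(x,y) ↦ exp (−t ‖Φ x − Φ y‖²)` is strictly positive definite. -/
theorem exp_neg_dist_sq_isStrictPosKernel {X : Type*}
    {𝕜 H : Type*} [RCLike 𝕜] [NormedAddCommGroup H] [InnerProductSpace 𝕜 H] [CompleteSpace H]
    (Φ : X → H) (hΦ : Function.Injective Φ) (t : ℝ) (ht : 0 < t) :
    IsStrictPosKernel (fun x y => (Real.exp (-t * ‖Φ x - Φ y‖ ^ 2) : ℂ)) := by
  intro n x hx c hc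
  letI : InnerProductSpace ℝ H := InnerProductSpace.rclikeToReal 𝕜 H
  set u : Fin n → H := fun i => Φ (x i) with hu
  have hu_inj : Function.Injective u := fun i j h => hx (hΦ h)
  haveI hfin : FiniteDimensional ℝ (Submodule.span ℝ (Set.range u)) :=
    FiniteDimensional.span_of_finite ℝ (Set.finite_range u)
  set W := Submodule.span ℝ (Set.range u) with hW
  let b := stdOrthonormalBasis ℝ W
  set y : Fin n → EuclideanSpace ℝ (Fin (Module.finrank ℝ W)) := fun i =>
    b.repr ⟨u i, Submodule.subset_span (Set.mem_range_self i)⟩ with hy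
  have hnorm : ∀ i j : Fin n, ‖Φ (x i) - Φ (x j)‖ = ‖y i - y j‖ := by
    intro i j
    rw [hy]
    rw [show (b.repr ⟨u i, Submodule.subset_span (Set.mem_range_self i)⟩
        - b.repr ⟨u j, Submodule.subset_span (Set.mem_range_self j)⟩)
        = b.repr (⟨u i, Submodule.subset_span (Set.mem_range_self i)⟩
          - ⟨u j, Submodule.subset_span (Set.mem_range_self j)⟩) from (map_sub _ _ _).symm]
    rw [LinearIsometryEquiv.norm_map]
    rfl
  have hy_inj : Function.Injective y := by
    intro i j h
    apply hu_inj
    have h2 := b.repr.injective h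
    exact congrArg Subtype.val h2
  simp only [hnorm]
  exact my_core t ht y hy_inj c hc
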